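/- For every x ∈ ℝ^d, v(x) = P·ṽ(Pᵀx) + c₂·(x − P·Pᵀ·x); that is, the velocity field decomposes into the lift of the d*-dimensional velocity acting on the coordinates Pᵀx along the manifold, plus the linear field c₂·(I − PPᵀ)x acting on the orthogonal complement. -/

import Mathlib

open MeasureTheory Real Matrix

noncomputable section

/-- velocity decomposition, equation (eq:manifold b) of Lemma VIII.3
of the paper. Let `P` be a `d × d*` matrix with orthonormal columns, `ν̃` a probability
measure on `ℝ^{d*}` supported in the unit cube, and `ν = P_♯ ν̃`. With `s² = α² + σ²β²`,
coefficients `c₁ = α(αb - aβ)/s²`, `c₂ = (αa + σ²βb)/s²`, `d`-dimensional tilted mean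
`ū`, `d*`-dimensional tilted mean `ũ*`, and velocity fields `v(x) = c₁ ū(x) + c₂ x`,
`ṽ(x̃) = c₁ ũ*(x̃) + c₂ x̃`, the velocity decomposes as
`v(x) = P ṽ(Pᵀx) + c₂ (x - PPᵀx)`. -/
theorem velocity_manifold_decomposition
    {d dstar : ℕ} (h1 : 1 ≤ dstar) (hdd : dstar ≤ d)
    (P : Matrix (Fin d) (Fin dstar) ℝ) (hP : Pᵀ * P = 1)
    (νt : Measure (Fin dstar → ℝ)) [IsProbabilityMeasure νt]
    (hsupp : ∀ᵐ u ∂νt, ∀ j, u j ∈ Set.Icc (0 : ℝ) 1)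
    (ν : Measure (Fin d → ℝ)) (hν : ν = Measure.map (fun u => P.mulVec u) νt)
    (σ α β a b : ℝ) (hσ : 0 < σ) (hα : 0 ≤ α) (hβ : 0 ≤ β)
    (s2 : ℝ) (hs2 : s2 = α ^ 2 + σ ^ 2 * β ^ 2) (hs2pos : 0 < s2)
    (c₁ c₂ : ℝ) (hc₁ : c₁ = α * (α * b - a * β) / s2)
    (hc₂ : c₂ = (α * a + σ ^ 2 * β * b) / s2)
    (ubar : (Fin d → ℝ) → (Fin d → ℝ))
    (hubar : ∀ x, ubar x =
      (∫ u, Real.exp (-(∑ i, (x i - β * u i) ^ 2) / (2 * s2)) ∂ν)⁻¹ •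
        ∫ u, Real.exp (-(∑ i, (x i - β * u i) ^ 2) / (2 * s2)) • u ∂ν)
    (utilde : (Fin dstar → ℝ) → (Fin dstar → ℝ))
    (hutilde : ∀ xt, utilde xt =
      (∫ u, Real.exp (-(∑ j, (xt j - β * u j) ^ 2) / (2 * s2)) ∂νt)⁻¹ •
        ∫ u, Real.exp (-(∑ j, (xt j - β * u j) ^ 2) / (2 * s2)) • u ∂νt)
    (v : (Fin d → ℝ) → (Fin d → ℝ)) (hv : ∀ x, v x = c₁ • ubar x + c₂ • x)
    (vt : (Fin dstar → ℝ) → (Fin dstar → ℝ))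
    (hvt : ∀ xt, vt xt = c₁ • utilde xt + c₂ • xt) :
    ∀ x : Fin d → ℝ,
      v x = P.mulVec (vt (Pᵀ.mulVec x)) + c₂ • (x - P.mulVec (Pᵀ.mulVec x)) := by

  intro x
  set xt := Pᵀ.mulVec x with hxt
  set r : Fin d → ℝ := x - P.mulVec xt with hr
  have hPPxt : Pᵀ.mulVec (P.mulVec xt) = xt := by
    rw [Matrix.mulVec_mulVec, hP, Matrix.one_mulVec]
  have hPr : Pᵀ.mulVec r = 0 := by
    rw [hr, Matrix.mulVec_sub, hPPxt]
    simp [hxt]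
  -- key quadratic identity
  have key : ∀ u : Fin dstar → ℝ,
      (∑ i, (x i - β * P.mulVec u i) ^ 2)
        = (∑ i, r i ^ 2) + ∑ j, (xt j - β * u j) ^ 2 := by
    intro u
    set w : Fin dstar → ℝ := xt - β • u with hw
    have hPw : P.mulVec w = P.mulVec xt - β • P.mulVec u := by
      rw [hw, Matrix.mulVec_sub, Matrix.mulVec_smul]
    have hdecomp : ∀ i, x i - β * P.mulVec u i = r i + P.mulVec w i := by
      intro i
      have := congrFun hPw i
      simp only [Pi.sub_apply, Pi.smul_apply, smul_eq_mul] at this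
      rw [this, hr]
      simp
    have h1' : ∑ i, (x i - β * P.mulVec u i) ^ 2
        = ∑ i, (r i ^ 2 + 2 * (r i * P.mulVec w i) + P.mulVec w i ^ 2) := by
      refine Finset.sum_congr rfl fun i _ => ?_
      rw [hdecomp i]; ring
    have hcross : ∑ i, 2 * (r i * P.mulVec w i) = 0 := by
      rw [← Finset.mul_sum]
      have e : ∑ i, r i * P.mulVec w i = r ⬝ᵥ P.mulVec w := rfl
      rw [e, Matrix.dotProduct_mulVec, ← Matrix.mulVec_transpose, hPr]
      simp
    have hnorm : ∑ i, P.mulVec w i ^ 2 = ∑ j, (xt j - β * u j) ^ 2 := by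
      have e1 : ∑ i, P.mulVec w i ^ 2 = (P.mulVec w) ⬝ᵥ (P.mulVec w) := by
        simp [dotProduct, sq]
      have e2 : (P.mulVec w) ⬝ᵥ (P.mulVec w) = w ⬝ᵥ w := by
        rw [Matrix.dotProduct_mulVec, ← Matrix.mulVec_transpose,
          Matrix.mulVec_mulVec, hP, Matrix.one_mulVec]
      rw [e1, e2]
      simp [dotProduct, hw, sq]
    rw [h1', Finset.sum_add_distrib, Finset.sum_add_distrib, hcross, hnorm]
    ring
  set C : ℝ := ∑ i, r i ^ 2 with hC
  set K : ℝ := Real.exp (-C / (2 * s2)) with hK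
  have hKpos : (0:ℝ) < K := Real.exp_pos _
  set g : (Fin dstar → ℝ) → ℝ :=
    fun u => Real.exp (-(∑ j, (xt j - β * u j) ^ 2) / (2 * s2)) with hg
  have hgcont : Continuous g := by
    apply Real.continuous_exp.comp
    fun_prop
  have hfac : ∀ u, Real.exp (-(∑ i, (x i - β * P.mulVec u i) ^ 2) / (2 * s2))
      = K * g u := by
    intro u
    rw [key u, hK, hg, ← Real.exp_add, neg_add, add_div]
  have hPm : Continuous (fun u : Fin dstar → ℝ => P.mulVec u) := by
    have := P.mulVecLin.continuous_of_finiteDimensional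
    exact this
  have hfs : Continuous fun y : Fin d → ℝ =>
      Real.exp (-(∑ i, (x i - β * y i) ^ 2) / (2 * s2)) := by
    apply Real.continuous_exp.comp
    fun_prop
  have hfv : Continuous fun y : Fin d → ℝ =>
      Real.exp (-(∑ i, (x i - β * y i) ^ 2) / (2 * s2)) • y := hfs.smul continuous_id
  have hint : Integrable (fun u => g u • u) νt := by
    refine Integrable.mono' (integrable_const (1:ℝ))
      ((hgcont.smul continuous_id).aestronglyMeasurable) ?_
    filter_upwards [hsupp] with u hu
    have hSnn : (0:ℝ) ≤ ∑ j, (xt j - β * u j) ^ 2 :=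
      Finset.sum_nonneg fun j _ => sq_nonneg _
    have hg1 : g u ≤ 1 := by
      rw [hg]
      apply Real.exp_le_one_iff.mpr
      apply div_nonpos_of_nonpos_of_nonneg
      · simpa using hSnn
      · positivity
    have hgnn : 0 ≤ g u := le_of_lt (Real.exp_pos _)
    have hnu : ‖u‖ ≤ 1 := by
      rw [pi_norm_le_iff_of_nonneg zero_le_one]
      intro j
      rw [Real.norm_eq_abs, abs_le]
      obtain ⟨h0, h1l⟩ := hu j
      constructor <;> linarith
    calc ‖g u • u‖ = ‖g u‖ * ‖u‖ := norm_smul _ _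
      _ ≤ 1 * 1 := by
          apply mul_le_mul _ hnu (norm_nonneg _) zero_le_one
          rwa [Real.norm_eq_abs, abs_of_nonneg hgnn]
      _ = 1 := mul_one 1
  have hden : (∫ u, Real.exp (-(∑ i, (x i - β * u i) ^ 2) / (2 * s2)) ∂ν)
      = K * ∫ u, g u ∂νt := by
    rw [hν, integral_map hPm.aemeasurable hfs.aestronglyMeasurable]
    simp_rw [hfac]
    rw [integral_const_mul]
  have hnum : (∫ u, Real.exp (-(∑ i, (x i - β * u i) ^ 2) / (2 * s2)) • u ∂ν)
      = K • P.mulVec (∫ u, g u • u ∂νt) := by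
    rw [hν, integral_map hPm.aemeasurable hfv.aestronglyMeasurable]
    simp_rw [hfac, ← smul_smul]
    rw [integral_smul]
    congr 1
    have hL : ∫ u, (LinearMap.toContinuousLinearMap P.mulVecLin) (g u • u) ∂νt
        = (LinearMap.toContinuousLinearMap P.mulVecLin) (∫ u, g u • u ∂νt) :=
      ContinuousLinearMap.integral_comp_comm _ hint
    simpa [Matrix.mulVecLin_apply] using hL
  have hub : ubar x = P.mulVec (utilde xt) := by
    rw [hubar x, hutilde xt, hden, hnum, Matrix.mulVec_smul, smul_smul]
    have hco : ((K * ∫ u, g u ∂νt)⁻¹ * K) = (∫ u, g u ∂νt)⁻¹ := by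
      rw [mul_inv, mul_comm, ← mul_assoc, mul_inv_cancel₀ hKpos.ne', one_mul]
    rw [hco]
  rw [hv x, hvt xt, hub, Matrix.mulVec_add, Matrix.mulVec_smul, Matrix.mulVec_smul,
    smul_sub]
  abel
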